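/- For an m×n matrix X = (x^i_j) with entries in K*, define Φ = φ(X) by φ^i_j = Σ_{γ:(i,1)→(1,j)} x_γ, the sum over all monotone lattice paths from (i,1) to (1,j) of the products of entries at vertices on the path. Then the special minor τ^i_j(Φ) equals the product Π_{a≤i, b≤j} x^a_b of all entries in the upper-left i×j corner of X, and consequently x^i_j = (τ^i_j τ^{i−1}_{j−1})/(τ^{i−1}_j τ^i_{j−1}). -/

import Mathlib

/-- A monotone (shortest) lattice path from `(i,1)` to `(1,j)` in the grid, encoded as an
eventually-constant function `p : ℕ → ℕ × ℕ` of length `(i−1)+(j−1)`: each step either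
decreases the row by one or increases the column by one. -/
def IsPathNW (i j : ℕ) (p : ℕ → ℕ × ℕ) : Prop :=
  p 0 = (i, 1) ∧
  (∀ k, k < (i - 1) + (j - 1) →
    (p (k + 1) = ((p k).1 - 1, (p k).2) ∨ p (k + 1) = ((p k).1, (p k).2 + 1))) ∧
  (∀ k, (i - 1) + (j - 1) ≤ k → p k = (1, j))

/-- The weight of the path `p : (i,1) → (1,j)`: the product of `x^a_b` over all vertices
`(a,b)` on the path. -/
def pathProd {K : Type*} [Field K] (x : ℕ → ℕ → K) (i j : ℕ) (p : ℕ → ℕ × ℕ) : K :=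
  ∏ k ∈ Finset.range ((i - 1) + (j - 1) + 1), x (p k).1 (p k).2

/-- An `r`-tuple of nonintersecting (pairwise vertex-disjoint) paths
`γ_k : (I k, 1) → (1, J k)`. -/
def NITuple (r : ℕ) (I J : Fin r → ℕ) (γ : Fin r → ℕ → ℕ × ℕ) : Prop :=
  (∀ k, IsPathNW (I k) (J k) (γ k)) ∧
  ∀ k l : Fin r, k ≠ l → ∀ s t : ℕ, γ k s ≠ γ l t


namespace TRSK

variable {i j : ℕ} {p : ℕ → ℕ × ℕ}

lemma row_anti (h : IsPathNW i j p) :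
    ∀ k l, k ≤ l → l ≤ (i-1)+(j-1) → (p l).1 ≤ (p k).1 := by
  intro k l hkl hl
  induction l, hkl using Nat.le_induction with
  | base => exact le_rfl
  | succ l hl' ih =>
    have ihl := ih (by omega)
    rcases h.2.1 l (by omega) with h1 | h1 <;> rw [h1] <;> simp <;> omega

lemma col_mono (h : IsPathNW i j p) :
    ∀ k l, k ≤ l → l ≤ (i-1)+(j-1) → (p k).2 ≤ (p l).2 := by
  intro k l hkl hl
  induction l, hkl using Nat.le_induction with
  | base => exact le_rfl
  | succ l hl' ih =>
    have ihl := ih (by omega)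
    rcases h.2.1 l (by omega) with h1 | h1 <;> rw [h1] <;> simp <;> omega

lemma bounds (h : IsPathNW i j p) {k : ℕ} (hk : k ≤ (i-1)+(j-1)) :
    1 ≤ (p k).1 ∧ (p k).1 ≤ i ∧ 1 ≤ (p k).2 ∧ (p k).2 ≤ j := by
  have h0 := h.1
  have hL := h.2.2 ((i-1)+(j-1)) le_rfl
  have r1 := row_anti h k ((i-1)+(j-1)) hk le_rfl
  have r2 := row_anti h 0 k (Nat.zero_le _) hk
  have c1 := col_mono h 0 k (Nat.zero_le _) hk
  have c2 := col_mono h k ((i-1)+(j-1)) hk le_rfl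
  rw [hL] at r1 c2
  rw [h0] at r2 c1
  simp at r1 r2 c1 c2
  omega

lemma isPathNW_finite (i j : ℕ) : {p : ℕ → ℕ × ℕ | IsPathNW i j p}.Finite := by
  apply Set.Finite.of_finite_image
    (f := fun p (k : Fin ((i-1)+(j-1)+1)) => p (k : ℕ))
  · apply Set.Finite.subset (Set.Finite.pi
      (fun _ : Fin ((i-1)+(j-1)+1) => ((Set.finite_Iic i).prod (Set.finite_Iic j))))
    rintro f ⟨p, hp, rfl⟩
    intro k _
    have hb := bounds hp (k := (k : ℕ)) (by omega)
    exact ⟨hb.2.1, hb.2.2.2⟩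
  · intro p hp q hq hpq
    funext k
    by_cases hk : k ≤ (i-1)+(j-1)
    · exact congrFun hpq ⟨k, by omega⟩
    · rw [hp.2.2 k (by omega), hq.2.2 k (by omega)]

variable {K : Type*} [Field K]

noncomputable def T (x : ℕ → ℕ → K) (i j : ℕ) : K :=
  ∑ᶠ (p : ℕ → ℕ × ℕ) (_ : IsPathNW i j p), pathProd x i j p

lemma T_def (x : ℕ → ℕ → K) (i j : ℕ) :
    T x i j = ∑ᶠ p ∈ {p : ℕ → ℕ × ℕ | IsPathNW i j p}, pathProd x i j p := rfl

lemma T_left_zero (x : ℕ → ℕ → K) (j : ℕ) : T x 0 j = 0 := by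
  rw [T_def]
  have : {p : ℕ → ℕ × ℕ | IsPathNW 0 j p} = ∅ := by
    ext p
    simp only [Set.mem_setOf_eq, Set.mem_empty_iff_false, iff_false]
    intro hp
    have r1 := row_anti hp 0 ((0-1)+(j-1)) (Nat.zero_le _) le_rfl
    rw [hp.1, hp.2.2 _ le_rfl] at r1
    simp at r1
  rw [this, finsum_mem_empty]

lemma T_right_zero (x : ℕ → ℕ → K) (i : ℕ) : T x i 0 = 0 := by
  rw [T_def]
  have : {p : ℕ → ℕ × ℕ | IsPathNW i 0 p} = ∅ := by
    ext p
    simp only [Set.mem_setOf_eq, Set.mem_empty_iff_false, iff_false]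
    intro hp
    have c1 := col_mono hp 0 ((i-1)+(0-1)) (Nat.zero_le _) le_rfl
    rw [hp.1, hp.2.2 _ le_rfl] at c1
    simp at c1
  rw [this, finsum_mem_empty]

lemma T_one_one (x : ℕ → ℕ → K) : T x 1 1 = x 1 1 := by
  rw [T_def]
  have : {p : ℕ → ℕ × ℕ | IsPathNW 1 1 p} = {fun _ => (1,1)} := by
    ext p
    simp only [Set.mem_setOf_eq, Set.mem_singleton_iff]
    constructor
    · intro hp; funext k; exact hp.2.2 k (by omega)
    · rintro rfl
      exact ⟨rfl, fun k hk => by omega, fun k _ => rfl⟩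
  rw [this, finsum_mem_singleton]
  simp [pathProd]

lemma finsum_mem_mul_left {α : Type*} {t : Set α} (ht : t.Finite) (c : K) (g : α → K) :
    ∑ᶠ q ∈ t, c * g q = c * ∑ᶠ q ∈ t, g q := by
  rw [finsum_mem_eq_finite_toFinset_sum _ ht, finsum_mem_eq_finite_toFinset_sum _ ht,
    Finset.mul_sum]


lemma bij_dropFirst_up {x : ℕ → ℕ → K} (hi : 2 ≤ i) (hj : 1 ≤ j) :
    ∑ᶠ p ∈ {p : ℕ → ℕ × ℕ | IsPathNW i j p ∧ p 1 = (i-1,1)}, pathProd x i j p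
      = x i 1 * T x (i-1) j := by
  rw [T_def, ← finsum_mem_mul_left (isPathNW_finite _ _)]
  apply finsum_mem_eq_of_bijOn (fun p => fun k => p (k+1))
  · refine ⟨?_, ?_, ?_⟩
    · rintro p ⟨hp, hp1⟩
      refine ⟨hp1, fun k hk => hp.2.1 (k+1) (by omega), fun k hk => hp.2.2 (k+1) (by omega)⟩
    · rintro p ⟨hp, -⟩ q ⟨hq, -⟩ hpq
      funext k
      match k with
      | 0 => rw [hp.1, hq.1]
      | (k+1) => exact congrFun hpq k
    · rintro q hq
      refine ⟨fun k => match k with | 0 => (i,1) | (k+1) => q k, ⟨⟨rfl, ?_, ?_⟩, ?_⟩, rfl⟩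
      · intro k hk
        match k with
        | 0 =>
          left
          show q 0 = (i - 1, 1)
          exact hq.1
        | (k+1) => exact hq.2.1 k (by omega)
      · intro k hk
        cases k with
        | zero => exact absurd hk (by omega)
        | succ k => exact hq.2.2 k (by omega)
      · exact hq.1
  · rintro p ⟨hp, -⟩
    show pathProd x i j p = x i 1 * pathProd x (i-1) j _
    unfold pathProd
    rw [Finset.prod_range_succ']
    rw [hp.1]
    rw [mul_comm]
    congr 1
    have : (i - 1 - 1) + (j - 1) + 1 = (i-1) + (j-1) := by omega
    rw [this]

lemma bij_dropFirst_right {x : ℕ → ℕ → K} (hi : 2 ≤ i) (hj : 2 ≤ j) :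
    ∑ᶠ p ∈ {p : ℕ → ℕ × ℕ | IsPathNW i j p ∧ p 1 = (i,2)}, pathProd x i j p
      = x i 1 * T (fun a b => x a (b+1)) i (j-1) := by
  rw [T_def, ← finsum_mem_mul_left (isPathNW_finite _ _)]
  apply finsum_mem_eq_of_bijOn (fun p => fun k => ((p (k+1)).1, (p (k+1)).2 - 1))
  · refine ⟨?_, ?_, ?_⟩
    · rintro p ⟨hp, hp1⟩
      refine ⟨?_, ?_, ?_⟩
      · beta_reduce
        rw [hp1]
        rfl
      · intro k hk
        beta_reduce
        rcases hp.2.1 (k+1) (by omega) with h1 | h1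
        · left; rw [h1]
        · right
          rw [h1]
          have hb := (bounds hp (k := k+1) (by omega)).2.2.1
          refine Prod.ext ?_ ?_ <;> simp <;> omega
      · intro k hk
        beta_reduce
        rw [hp.2.2 (k+1) (by omega)]
    · rintro p ⟨hp, -⟩ q ⟨hq, -⟩ hpq
      funext k
      match k with
      | 0 => rw [hp.1, hq.1]
      | (k+1) =>
        by_cases hk : k + 1 ≤ (i-1)+(j-1)
        · have h1 := congrFun hpq k
          simp only [Prod.mk.injEq] at h1
          have hbp := (bounds hp (k := k+1) hk).2.2.1
          have hbq := (bounds hq (k := k+1) hk).2.2.1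
          exact Prod.ext h1.1 (by omega)
        · rw [hp.2.2 (k+1) (by omega), hq.2.2 (k+1) (by omega)]
    · rintro q hq
      refine ⟨fun k => match k with | 0 => (i,1) | (k+1) => ((q k).1, (q k).2 + 1),
        ⟨⟨rfl, ?_, ?_⟩, ?_⟩, ?_⟩
      · intro k hk
        cases k with
        | zero =>
          right
          show ((q 0).1, (q 0).2 + 1) = (i, 1 + 1)
          rw [hq.1]
        | succ k =>
          rcases hq.2.1 k (by omega) with h1 | h1
          · left
            show ((q (k+1)).1, (q (k+1)).2 + 1) = ((q k).1 - 1, (q k).2 + 1)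
            rw [h1]
          · right
            show ((q (k+1)).1, (q (k+1)).2 + 1) = ((q k).1, (q k).2 + 1 + 1)
            rw [h1]
      · intro k hk
        cases k with
        | zero => exact absurd hk (by omega)
        | succ k =>
          have := hq.2.2 k (by omega)
          show ((q k).1, (q k).2 + 1) = (1, j)
          rw [this]
          refine Prod.ext ?_ ?_ <;> simp <;> omega
      · show ((q 0).1, (q 0).2 + 1) = (i, 2)
        rw [hq.1]
      · funext k
        show ((q k).1, (q k).2 + 1 - 1) = q k
        simp
  · rintro p ⟨hp, -⟩
    show pathProd x i j p = x i 1 * pathProd _ i (j-1) _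
    unfold pathProd
    rw [Finset.prod_range_succ']
    rw [hp.1]
    rw [mul_comm]
    congr 1
    have : (i - 1) + (j - 1 - 1) + 1 = (i-1) + (j-1) := by omega
    rw [this]
    apply Finset.prod_congr rfl
    intro k hk
    simp only [Finset.mem_range] at hk
    have hb := (bounds hp (k := k+1) (by omega)).2.2.1
    show x (p (k+1)).1 (p (k+1)).2 = x (p (k+1)).1 ((p (k+1)).2 - 1 + 1)
    congr 1
    omega


lemma bij_dropLast_right {x : ℕ → ℕ → K} (hi : 1 ≤ i) (hj : 2 ≤ j) :
    ∑ᶠ p ∈ {p : ℕ → ℕ × ℕ | IsPathNW i j p ∧ p ((i-1)+(j-1) - 1) = (1, j-1)},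
      pathProd x i j p = x 1 j * T x i (j-1) := by
  rw [T_def, ← finsum_mem_mul_left (isPathNW_finite _ _)]
  apply finsum_mem_eq_of_bijOn
    (fun p => fun k => if k ≤ (i-1)+(j-1)-1 then p k else (1, j-1))
  · refine ⟨?_, ?_, ?_⟩
    · rintro p ⟨hp, hp1⟩
      refine ⟨?_, ?_, ?_⟩
      · beta_reduce
        rw [if_pos (show 0 ≤ (i-1)+(j-1)-1 by omega)]
        exact hp.1
      · intro k hk
        beta_reduce
        rw [if_pos (show k+1 ≤ (i-1)+(j-1)-1 by omega),
          if_pos (show k ≤ (i-1)+(j-1)-1 by omega)]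
        exact hp.2.1 k (by omega)
      · intro k hk
        beta_reduce
        by_cases hk2 : k ≤ (i-1)+(j-1)-1
        · rw [if_pos hk2]
          have hke : k = (i-1)+(j-1)-1 := by omega
          rw [hke, hp1]
        · rw [if_neg hk2]
    · rintro p ⟨hp, hp1⟩ q ⟨hq, hq1⟩ hpq
      funext k
      by_cases hk : k ≤ (i-1)+(j-1)-1
      · have h1 := congrFun hpq k
        beta_reduce at h1
        rw [if_pos hk, if_pos hk] at h1
        exact h1
      · rw [hp.2.2 k (by omega), hq.2.2 k (by omega)]
    · rintro q hq
      refine ⟨fun k => if k ≤ (i-1)+(j-1)-1 then q k else (1, j),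
        ⟨⟨?_, ?_, ?_⟩, ?_⟩, ?_⟩
      · beta_reduce
        rw [if_pos (show 0 ≤ (i-1)+(j-1)-1 by omega)]
        exact hq.1
      · intro k hk
        beta_reduce
        by_cases hk2 : k+1 ≤ (i-1)+(j-1)-1
        · rw [if_pos hk2, if_pos (show k ≤ (i-1)+(j-1)-1 by omega)]
          exact hq.2.1 k (by omega)
        · rw [if_neg hk2, if_pos (show k ≤ (i-1)+(j-1)-1 by omega)]
          have hqk : q k = (1, j-1) := hq.2.2 k (by omega)
          right
          rw [hqk]
          refine Prod.ext ?_ ?_ <;> simp <;> omega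
      · intro k hk
        beta_reduce
        rw [if_neg (show ¬ (k ≤ (i-1)+(j-1)-1) by omega)]
      · beta_reduce
        rw [if_pos (show (i-1)+(j-1)-1 ≤ (i-1)+(j-1)-1 by omega)]
        exact hq.2.2 _ (by omega)
      · funext k
        beta_reduce
        by_cases hk : k ≤ (i-1)+(j-1)-1
        · rw [if_pos hk, if_pos hk]
        · rw [if_neg hk, hq.2.2 k (by omega)]
  · rintro p ⟨hp, hp1⟩
    show pathProd x i j p = x 1 j * pathProd x i (j-1) _
    unfold pathProd
    rw [Finset.prod_range_succ, hp.2.2 ((i-1)+(j-1)) le_rfl, mul_comm]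
    congr 1
    rw [show (i-1)+(j-1-1)+1 = (i-1)+(j-1) from by omega]
    apply Finset.prod_congr rfl
    intro k hk
    simp only [Finset.mem_range] at hk
    beta_reduce
    rw [if_pos (show k ≤ (i-1)+(j-1)-1 by omega)]

lemma bij_dropLast_up {x : ℕ → ℕ → K} (hi : 2 ≤ i) (hj : 2 ≤ j) :
    ∑ᶠ p ∈ {p : ℕ → ℕ × ℕ | IsPathNW i j p ∧ p ((i-1)+(j-1) - 1) = (2, j)},
      pathProd x i j p = x 1 j * T (fun a b => x (a+1) b) (i-1) j := by
  rw [T_def, ← finsum_mem_mul_left (isPathNW_finite _ _)]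
  apply finsum_mem_eq_of_bijOn
    (fun p => fun k => if k ≤ (i-1)+(j-1)-1 then ((p k).1 - 1, (p k).2) else (1, j))
  · refine ⟨?_, ?_, ?_⟩
    · rintro p ⟨hp, hp1⟩
      refine ⟨?_, ?_, ?_⟩
      · beta_reduce
        rw [if_pos (show 0 ≤ (i-1)+(j-1)-1 by omega), hp.1]
      · intro k hk
        beta_reduce
        rw [if_pos (show k+1 ≤ (i-1)+(j-1)-1 by omega),
          if_pos (show k ≤ (i-1)+(j-1)-1 by omega)]
        rcases hp.2.1 k (by omega) with h1 | h1
        · left; rw [h1]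
        · right; rw [h1]
      · intro k hk
        beta_reduce
        by_cases hk2 : k ≤ (i-1)+(j-1)-1
        · rw [if_pos hk2]
          have hke : k = (i-1)+(j-1)-1 := by omega
          rw [hke, hp1]
          rfl
        · rw [if_neg hk2]
    · rintro p ⟨hp, hp1⟩ q ⟨hq, hq1⟩ hpq
      funext k
      by_cases hk : k ≤ (i-1)+(j-1)-1
      · have h1 := congrFun hpq k
        beta_reduce at h1
        rw [if_pos hk, if_pos hk] at h1
        simp only [Prod.mk.injEq] at h1
        have hrp := row_anti hp k ((i-1)+(j-1)-1) hk (by omega)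
        have hrq := row_anti hq k ((i-1)+(j-1)-1) hk (by omega)
        rw [hp1] at hrp
        rw [hq1] at hrq
        simp only [] at hrp hrq
        exact Prod.ext (by omega) h1.2
      · rw [hp.2.2 k (by omega), hq.2.2 k (by omega)]
    · rintro q hq
      refine ⟨fun k => if k ≤ (i-1)+(j-1)-1 then ((q k).1 + 1, (q k).2) else (1, j),
        ⟨⟨?_, ?_, ?_⟩, ?_⟩, ?_⟩
      · beta_reduce
        rw [if_pos (show 0 ≤ (i-1)+(j-1)-1 by omega), hq.1]
        refine Prod.ext ?_ ?_ <;> simp <;> omega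
      · intro k hk
        beta_reduce
        by_cases hk2 : k+1 ≤ (i-1)+(j-1)-1
        · rw [if_pos hk2, if_pos (show k ≤ (i-1)+(j-1)-1 by omega)]
          have hb := (bounds hq (k := k) (by omega)).1
          rcases hq.2.1 k (by omega) with h1 | h1
          · left
            rw [h1]
            refine Prod.ext ?_ ?_ <;> simp <;> omega
          · right
            rw [h1]
        · rw [if_neg hk2, if_pos (show k ≤ (i-1)+(j-1)-1 by omega)]
          have hqk : q k = (1, j) := hq.2.2 k (by omega)
          left
          rw [hqk]
          refine Prod.ext ?_ ?_ <;> simp <;> omega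
      · intro k hk
        beta_reduce
        rw [if_neg (show ¬ (k ≤ (i-1)+(j-1)-1) by omega)]
      · beta_reduce
        rw [if_pos (show (i-1)+(j-1)-1 ≤ (i-1)+(j-1)-1 by omega), hq.2.2 ((i-1)+(j-1)-1) (by omega)]
      · funext k
        beta_reduce
        by_cases hk : k ≤ (i-1)+(j-1)-1
        · rw [if_pos hk, if_pos hk]
          refine Prod.ext ?_ ?_ <;> simp
        · rw [if_neg hk, hq.2.2 k (by omega)]
  · rintro p ⟨hp, hp1⟩
    show pathProd x i j p = x 1 j * pathProd _ (i-1) j _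
    unfold pathProd
    rw [Finset.prod_range_succ, hp.2.2 ((i-1)+(j-1)) le_rfl, mul_comm]
    congr 1
    rw [show (i-1-1)+(j-1)+1 = (i-1)+(j-1) from by omega]
    apply Finset.prod_congr rfl
    intro k hk
    simp only [Finset.mem_range] at hk
    beta_reduce
    rw [if_pos (show k ≤ (i-1)+(j-1)-1 by omega)]
    show x (p k).1 (p k).2 = x ((p k).1 - 1 + 1) (p k).2
    have hb := (bounds hp (k := k) (by omega)).1
    congr 1
    omega


lemma split_first (hi : 2 ≤ i) (hj : 1 ≤ j) :
    {p : ℕ → ℕ × ℕ | IsPathNW i j p} =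
      {p | IsPathNW i j p ∧ p 1 = (i-1,1)} ∪ {p | IsPathNW i j p ∧ p 1 = (i,2)} := by
  ext p
  simp only [Set.mem_setOf_eq, Set.mem_union]
  constructor
  · intro hp
    rcases hp.2.1 0 (by omega) with h1 | h1
    · left
      refine ⟨hp, ?_⟩
      rw [h1, hp.1]
    · right
      refine ⟨hp, ?_⟩
      rw [h1, hp.1]
  · rintro (⟨hp, -⟩ | ⟨hp, -⟩) <;> exact hp

lemma split_last (hi : 1 ≤ i) (hj : 2 ≤ j) :
    {p : ℕ → ℕ × ℕ | IsPathNW i j p} =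
      {p | IsPathNW i j p ∧ p ((i-1)+(j-1)-1) = (1, j-1)} ∪
      {p | IsPathNW i j p ∧ p ((i-1)+(j-1)-1) = (2, j)} := by
  ext p
  simp only [Set.mem_setOf_eq, Set.mem_union]
  constructor
  · intro hp
    have hL := hp.2.2 ((i-1)+(j-1)) le_rfl
    have hstep := hp.2.1 ((i-1)+(j-1)-1) (by omega)
    rw [show (i-1)+(j-1)-1+1 = (i-1)+(j-1) from by omega, hL] at hstep
    rcases hstep with h1 | h1
    · right
      refine ⟨hp, ?_⟩
      have h2 := Prod.ext_iff.mp h1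
      simp only [] at h2
      refine Prod.ext ?_ ?_ <;> simp <;> omega
    · left
      refine ⟨hp, ?_⟩
      have h2 := Prod.ext_iff.mp h1
      simp only [] at h2
      refine Prod.ext ?_ ?_ <;> simp <;> omega
  · rintro (⟨hp, -⟩ | ⟨hp, -⟩) <;> exact hp

lemma first_right_empty {x : ℕ → ℕ → K} (hi : 2 ≤ i) (hj : j = 1) :
    {p : ℕ → ℕ × ℕ | IsPathNW i j p ∧ p 1 = (i,2)} = ∅ := by
  subst hj
  ext p
  simp only [Set.mem_setOf_eq, Set.mem_empty_iff_false, iff_false, not_and]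
  intro hp hp1
  have := col_mono hp 1 ((i-1)+(1-1)) (by omega) le_rfl
  rw [hp1, hp.2.2 _ le_rfl] at this
  simp at this

lemma last_up_empty {x : ℕ → ℕ → K} (hi : i = 1) (hj : 2 ≤ j) :
    {p : ℕ → ℕ × ℕ | IsPathNW i j p ∧ p ((i-1)+(j-1)-1) = (2, j)} = ∅ := by
  subst hi
  ext p
  simp only [Set.mem_setOf_eq, Set.mem_empty_iff_false, iff_false, not_and]
  intro hp hp1
  have := row_anti hp 0 ((1-1)+(j-1)-1) (Nat.zero_le _) (by omega)
  rw [hp1, hp.1] at this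
  simp at this

lemma T_rec_row {x : ℕ → ℕ → K} (hi : 2 ≤ i) (hj : 1 ≤ j) :
    T x i j = x i 1 * T x (i-1) j + x i 1 * T (fun a b => x a (b+1)) i (j-1) := by
  have hsplit := split_first (i := i) (j := j) hi hj
  have hdisj : Disjoint {p : ℕ → ℕ × ℕ | IsPathNW i j p ∧ p 1 = (i-1,1)}
      {p | IsPathNW i j p ∧ p 1 = (i,2)} := by
    rw [Set.disjoint_left]
    rintro p ⟨-, h1⟩ ⟨-, h2⟩
    rw [h1] at h2
    have := (Prod.ext_iff.mp h2).2
    simp at this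
  have hfin1 : {p : ℕ → ℕ × ℕ | IsPathNW i j p ∧ p 1 = (i-1,1)}.Finite :=
    (isPathNW_finite i j).subset (fun p hp => hp.1)
  have hfin2 : {p : ℕ → ℕ × ℕ | IsPathNW i j p ∧ p 1 = (i,2)}.Finite :=
    (isPathNW_finite i j).subset (fun p hp => hp.1)
  rw [T_def, hsplit, finsum_mem_union hdisj hfin1 hfin2, bij_dropFirst_up hi hj]
  congr 1
  rcases Nat.lt_or_ge j 2 with hj2 | hj2
  · have hj1 : j = 1 := by omega
    rw [first_right_empty (x := x) hi hj1, finsum_mem_empty, hj1]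
    simp [T_right_zero]
  · exact bij_dropFirst_right hi hj2

lemma T_rec_col {x : ℕ → ℕ → K} (hi : 1 ≤ i) (hj : 2 ≤ j) :
    T x i j = x 1 j * T x i (j-1) + x 1 j * T (fun a b => x (a+1) b) (i-1) j := by
  have hsplit := split_last (i := i) (j := j) hi hj
  have hdisj : Disjoint {p : ℕ → ℕ × ℕ | IsPathNW i j p ∧ p ((i-1)+(j-1)-1) = (1, j-1)}
      {p | IsPathNW i j p ∧ p ((i-1)+(j-1)-1) = (2, j)} := by
    rw [Set.disjoint_left]
    rintro p ⟨-, h1⟩ ⟨-, h2⟩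
    rw [h1] at h2
    have := (Prod.ext_iff.mp h2).1
    simp at this
  have hfin1 : {p : ℕ → ℕ × ℕ | IsPathNW i j p ∧ p ((i-1)+(j-1)-1) = (1, j-1)}.Finite :=
    (isPathNW_finite i j).subset (fun p hp => hp.1)
  have hfin2 : {p : ℕ → ℕ × ℕ | IsPathNW i j p ∧ p ((i-1)+(j-1)-1) = (2, j)}.Finite :=
    (isPathNW_finite i j).subset (fun p hp => hp.1)
  rw [T_def, hsplit, finsum_mem_union hdisj hfin1 hfin2, bij_dropLast_right hi hj]
  congr 1
  rcases Nat.lt_or_ge i 2 with hi2 | hi2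
  · have hi1 : i = 1 := by omega
    rw [last_up_empty (x := x) hi1 hj, finsum_mem_empty, hi1]
    simp [T_left_zero]
  · exact bij_dropLast_up hi2 hj

lemma T_col1 {x : ℕ → ℕ → K} (hi : 1 ≤ i) :
    T x i 1 = ∏ a ∈ Finset.Icc 1 i, x a 1 := by
  induction i with
  | zero => omega
  | succ i ih =>
    rcases Nat.lt_or_ge i 1 with h1 | h1
    · have : i = 0 := by omega
      subst this
      simpa using T_one_one x
    · rw [T_rec_row (by omega) le_rfl]
      simp only [Nat.add_sub_cancel]
      rw [ih h1, T_right_zero]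
      rw [Finset.prod_Icc_succ_top (by omega)]
      ring

lemma T_row1 {x : ℕ → ℕ → K} (hj : 1 ≤ j) :
    T x 1 j = ∏ b ∈ Finset.Icc 1 j, x 1 b := by
  induction j with
  | zero => omega
  | succ j ih =>
    rcases Nat.lt_or_ge j 1 with h1 | h1
    · have : j = 0 := by omega
      subst this
      simpa using T_one_one x
    · rw [T_rec_col le_rfl (by omega)]
      simp only [Nat.add_sub_cancel]
      rw [ih h1, T_left_zero]
      rw [Finset.prod_Icc_succ_top (by omega)]
      ring


lemma Icc_one_prod (f : ℕ → K) (n : ℕ) :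
    ∏ a ∈ Finset.Icc 1 n, f a = ∏ a ∈ Finset.range n, f (a+1) := by
  rw [← Finset.Ico_add_one_right_eq_Icc, Finset.prod_Ico_eq_prod_range]
  simp [add_comm]

lemma detD (j : ℕ) : ∀ (x : ℕ → ℕ → K) (i : ℕ), j + 1 ≤ i →
    (Matrix.of fun a b : Fin (j+1) => T x (i - (j+1) + 1 + (a : ℕ)) ((b : ℕ)+1)).det
      = ∏ a ∈ Finset.Icc 1 i, ∏ b ∈ Finset.Icc 1 (j+1), x a b := by
  induction j with
  | zero =>
    intro x i hi
    rw [Matrix.det_fin_one]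
    simp only [Matrix.of_apply, Fin.val_zero, add_zero, zero_add]
    rw [show i - 1 + 1 = i from by omega, T_col1 (by omega)]
    apply Finset.prod_congr rfl
    intro a _
    simp
  | succ j ih =>
    intro x i hi
    set base := i - (j+2) + 1 with hbase
    have hbase1 : 1 ≤ base := by omega
    set N : Matrix (Fin (j+2)) (Fin (j+2)) K := Matrix.of (fun a b : Fin (j+2) =>
      if (a : ℕ) = 0 then T x base ((b : ℕ)+1)
      else x (base + (a : ℕ)) 1 * T (fun a b => x a (b+1)) (base + (a : ℕ)) (b : ℕ)) with hN
    have hdet : (Matrix.of fun a b : Fin (j+2) =>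
        T x (i - (j+2) + 1 + (a : ℕ)) ((b : ℕ)+1)).det = N.det := by
      apply Matrix.det_eq_of_forall_row_eq_smul_add_pred
        (c := fun a : Fin (j+1) => x (base + (a : ℕ) + 1) 1)
      · intro b
        simp [hN]
        rfl
      · intro a b
        simp only [hN, Matrix.of_apply, Fin.val_succ, Fin.coe_castSucc]
        rw [if_neg (by omega)]
        rw [show base + ((a : ℕ)+1) = base + (a : ℕ) + 1 from by omega]
        have hrec := T_rec_row (x := x) (i := base + (a : ℕ) + 1) (j := (b : ℕ)+1)
          (by omega) (by omega)
        rw [show base + (a : ℕ) + 1 - 1 = base + (a : ℕ) from by omega,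
          Nat.add_sub_cancel] at hrec
        rw [hrec]
        ring
    rw [show (i - (j+1+1) + 1) = base from rfl] at *
    rw [hdet, Matrix.det_succ_column_zero]
    have hzero : ∀ a : Fin (j+1), N a.succ 0 = 0 := by
      intro a
      simp only [hN, Matrix.of_apply, Fin.val_succ, Fin.val_zero]
      rw [if_neg (by omega), T_right_zero, mul_zero]
    rw [Fin.sum_univ_succ,
      Finset.sum_eq_zero (fun a _ => by rw [hzero a, mul_zero, zero_mul]), add_zero]
    simp only [Fin.val_zero, pow_zero, one_mul, Fin.succAbove_zero]
    set A : Matrix (Fin (j+1)) (Fin (j+1)) K := Matrix.of (fun a b : Fin (j+1) =>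
      T (fun a b => x a (b+1)) (base + (a : ℕ) + 1) ((b : ℕ)+1)) with hA
    have hsub : N.submatrix Fin.succ Fin.succ
        = Matrix.of (fun a b : Fin (j+1) => x (base + (a : ℕ) + 1) 1 * A a b) := by
      ext a b
      simp only [Matrix.submatrix_apply, hN, hA, Matrix.of_apply, Fin.val_succ]
      rw [if_neg (by omega)]
      rw [show base + ((a : ℕ)+1) = base + (a : ℕ) + 1 from by omega]
    rw [hsub, Matrix.det_mul_column]
    have hN00 : N 0 0 = ∏ a ∈ Finset.Icc 1 base, x a 1 := by
      simp only [hN, Matrix.of_apply, Fin.val_zero, if_pos rfl, zero_add]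
      exact T_col1 hbase1
    have hAeq : A = Matrix.of (fun a b : Fin (j+1) =>
        T (fun a b => x a (b+1)) (i - (j+1) + 1 + (a : ℕ)) ((b : ℕ)+1)) := by
      ext a b
      simp only [hA, Matrix.of_apply]
      rw [show i - (j+1) + 1 + (a : ℕ) = base + (a : ℕ) + 1 from by omega]
    rw [hN00, hAeq, ih (fun a b => x a (b+1)) i (by omega)]
    rw [Fin.prod_univ_eq_prod_range (fun a => x (base + a + 1) 1) (j+1)]
    simp only [Icc_one_prod]
    have hR : ∏ a ∈ Finset.range i, ∏ b ∈ Finset.range (j+1+1), x (a+1) (b+1)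
        = (∏ a ∈ Finset.range i, x (a+1) 1) *
          ∏ a ∈ Finset.range i, ∏ b ∈ Finset.range (j+1), x (a+1) (b+1+1) := by
      rw [← Finset.prod_mul_distrib]
      apply Finset.prod_congr rfl
      intro a _
      rw [Finset.prod_range_succ' (fun b => x (a+1) (b+1)) (j+1)]
      rw [show (0:ℕ)+1 = 1 from rfl]
      ring
    have hC : ∏ a ∈ Finset.range i, x (a+1) 1
        = (∏ a ∈ Finset.range base, x (a+1) 1) *
          ∏ a ∈ Finset.range (j+1), x (base + a + 1) 1 := by
      rw [show i = base + (j+1) from by omega, Finset.prod_range_add]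
    rw [hR, hC]
    ring


lemma detD' (i : ℕ) : ∀ (x : ℕ → ℕ → K) (j : ℕ), i + 1 ≤ j →
    (Matrix.of fun a b : Fin (i+1) => T x ((a : ℕ)+1) (j - (i+1) + 1 + (b : ℕ))).det
      = ∏ a ∈ Finset.Icc 1 (i+1), ∏ b ∈ Finset.Icc 1 j, x a b := by
  induction i with
  | zero =>
    intro x j hj
    rw [Matrix.det_fin_one]
    simp only [Matrix.of_apply, Fin.val_zero, add_zero, zero_add]
    rw [show j - 1 + 1 = j from by omega, T_row1 (by omega)]
    rw [show Finset.Icc 1 1 = {1} from rfl, Finset.prod_singleton]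
  | succ i ih =>
    intro x j hj
    set cb := j - (i+2) + 1 with hcb
    have hcb1 : 1 ≤ cb := by omega
    set N : Matrix (Fin (i+2)) (Fin (i+2)) K := Matrix.of (fun a b : Fin (i+2) =>
      if (b : ℕ) = 0 then T x ((a : ℕ)+1) cb
      else x 1 (cb + (b : ℕ)) * T (fun a b => x (a+1) b) (a : ℕ) (cb + (b : ℕ))) with hN
    have hdet : (Matrix.of fun a b : Fin (i+2) =>
        T x ((a : ℕ)+1) (j - (i+2) + 1 + (b : ℕ))).det = N.det := by
      apply Matrix.det_eq_of_forall_col_eq_smul_add_pred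
        (c := fun b : Fin (i+1) => x 1 (cb + (b : ℕ) + 1))
      · intro a
        simp [hN]
        rfl
      · intro a b
        simp only [hN, Matrix.of_apply, Fin.val_succ, Fin.coe_castSucc]
        rw [if_neg (by omega)]
        rw [show cb + ((b : ℕ)+1) = cb + (b : ℕ) + 1 from by omega]
        have hrec := T_rec_col (x := x) (i := (a : ℕ)+1) (j := cb + (b : ℕ) + 1)
          (by omega) (by omega)
        rw [show cb + (b : ℕ) + 1 - 1 = cb + (b : ℕ) from by omega,
          Nat.add_sub_cancel] at hrec
        rw [hrec]
        ring
    rw [show (j - (i+1+1) + 1) = cb from rfl] at *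
    rw [hdet, Matrix.det_succ_row_zero]
    have hzero : ∀ b : Fin (i+1), N 0 b.succ = 0 := by
      intro b
      simp only [hN, Matrix.of_apply, Fin.val_succ, Fin.val_zero]
      rw [if_neg (by omega), T_left_zero, mul_zero]
    rw [Fin.sum_univ_succ,
      Finset.sum_eq_zero (fun b _ => by rw [hzero b, mul_zero, zero_mul]), add_zero]
    simp only [Fin.val_zero, pow_zero, one_mul, Fin.succAbove_zero]
    set A : Matrix (Fin (i+1)) (Fin (i+1)) K := Matrix.of (fun a b : Fin (i+1) =>
      T (fun a b => x (a+1) b) ((a : ℕ)+1) (cb + (b : ℕ) + 1)) with hA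
    have hsub : N.submatrix Fin.succ Fin.succ
        = Matrix.of (fun a b : Fin (i+1) => x 1 (cb + (b : ℕ) + 1) * A a b) := by
      ext a b
      simp only [Matrix.submatrix_apply, hN, hA, Matrix.of_apply, Fin.val_succ]
      rw [if_neg (by omega)]
      rw [show cb + ((b : ℕ)+1) = cb + (b : ℕ) + 1 from by omega]
    rw [hsub, Matrix.det_mul_row]
    have hN00 : N 0 0 = ∏ b ∈ Finset.Icc 1 cb, x 1 b := by
      simp only [hN, Matrix.of_apply, Fin.val_zero, if_pos rfl, zero_add]
      exact T_row1 hcb1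
    have hAeq : A = Matrix.of (fun a b : Fin (i+1) =>
        T (fun a b => x (a+1) b) ((a : ℕ)+1) (j - (i+1) + 1 + (b : ℕ))) := by
      ext a b
      simp only [hA, Matrix.of_apply]
      rw [show j - (i+1) + 1 + (b : ℕ) = cb + (b : ℕ) + 1 from by omega]
    rw [hN00, hAeq, ih (fun a b => x (a+1) b) j (by omega)]
    rw [Fin.prod_univ_eq_prod_range (fun b => x 1 (cb + b + 1)) (i+1)]
    simp only [Icc_one_prod]
    have hR : ∏ a ∈ Finset.range (i+1+1), ∏ b ∈ Finset.range j, x (a+1) (b+1)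
        = (∏ b ∈ Finset.range j, x 1 (b+1)) *
          ∏ a ∈ Finset.range (i+1), ∏ b ∈ Finset.range j, x (a+1+1) (b+1) := by
      rw [Finset.prod_range_succ' (fun a => ∏ b ∈ Finset.range j, x (a+1) (b+1)) (i+1)]
      rw [show (0:ℕ)+1 = 1 from rfl]
      ring
    have hC : ∏ b ∈ Finset.range j, x 1 (b+1)
        = (∏ b ∈ Finset.range cb, x 1 (b+1)) *
          ∏ b ∈ Finset.range (i+1), x 1 (cb + b + 1) := by
      rw [show j = cb + (i+1) from by omega, Finset.prod_range_add]
    rw [hR, hC]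
    ring

end TRSK

theorem tropical_rsk_stmt16 {K : Type*} [Field K] {m n : ℕ}
    (x : ℕ → ℕ → K) (hx : ∀ i j : ℕ, 1 ≤ i → i ≤ m → 1 ≤ j → j ≤ n → x i j ≠ 0)
    (Φ : Matrix (Fin m) (Fin n) K)
    (hΦ : ∀ (i : Fin m) (j : Fin n),
      Φ i j = ∑ᶠ (p : ℕ → ℕ × ℕ) (_ : IsPathNW ((i : ℕ) + 1) ((j : ℕ) + 1) p),
        pathProd x ((i : ℕ) + 1) ((j : ℕ) + 1) p)
    (τ : ℕ → ℕ → K)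
    (hτ0 : ∀ k : ℕ, τ 0 k = 1 ∧ τ k 0 = 1)
    (hτdef : ∀ (i j : ℕ) (h1 : 1 ≤ i) (h2 : i ≤ m) (h3 : 1 ≤ j) (h4 : j ≤ n),
      τ i j = if hji : j ≤ i then
          (Matrix.of (fun a b : Fin j =>
            Φ ⟨i - j + (a : ℕ), by have := a.isLt; omega⟩
              ⟨(b : ℕ), by have := b.isLt; omega⟩)).det
        else
          (Matrix.of (fun a b : Fin i =>
            Φ ⟨(a : ℕ), by have := a.isLt; omega⟩
              ⟨j - i + (b : ℕ), by have := b.isLt; omega⟩)).det) :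
    ∀ i j : ℕ, 1 ≤ i → i ≤ m → 1 ≤ j → j ≤ n →
      (τ i j = ∏ a ∈ Finset.Icc 1 i, ∏ b ∈ Finset.Icc 1 j, x a b) ∧
      x i j = τ i j * τ (i - 1) (j - 1) / (τ (i - 1) j * τ i (j - 1)) := by
  have hT : ∀ (i' : Fin m) (j' : Fin n), Φ i' j' = TRSK.T x ((i' : ℕ)+1) ((j' : ℕ)+1) :=
    fun i' j' => (hΦ i' j').trans rfl
  have key : ∀ i j : ℕ, i ≤ m → j ≤ n →
      τ i j = ∏ a ∈ Finset.Icc 1 i, ∏ b ∈ Finset.Icc 1 j, x a b := by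
    intro i j him hjn
    rcases Nat.eq_zero_or_pos i with rfl | hi
    · simp [(hτ0 j).1]
    rcases Nat.eq_zero_or_pos j with rfl | hj
    · simp [(hτ0 i).2]
    rw [hτdef i j hi him hj hjn]
    by_cases hji : j ≤ i
    · rw [dif_pos hji]
      obtain ⟨j', rfl⟩ : ∃ j', j = j' + 1 := ⟨j - 1, by omega⟩
      rw [← TRSK.detD j' x i (by omega)]
      congr 1
      ext a b
      simp only [Matrix.of_apply]
      rw [hT]
      show TRSK.T x (i - (j'+1) + (a : ℕ) + 1) ((b : ℕ)+1) = _
      rw [show i - (j'+1) + (a : ℕ) + 1 = i - (j'+1) + 1 + (a : ℕ) from by omega]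
    · rw [dif_neg hji]
      obtain ⟨i', rfl⟩ : ∃ i', i = i' + 1 := ⟨i - 1, by omega⟩
      rw [← TRSK.detD' i' x j (by omega)]
      congr 1
      ext a b
      simp only [Matrix.of_apply]
      rw [hT]
      show TRSK.T x ((a : ℕ)+1) (j - (i'+1) + (b : ℕ) + 1) = _
      rw [show j - (i'+1) + (b : ℕ) + 1 = j - (i'+1) + 1 + (b : ℕ) from by omega]
  have hnz : ∀ i' j', i' ≤ m → j' ≤ n →
      (∏ a ∈ Finset.Icc 1 i', ∏ b ∈ Finset.Icc 1 j', x a b) ≠ 0 := by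
    intro i' j' him' hjn'
    rw [Finset.prod_ne_zero_iff]
    intro a ha
    rw [Finset.prod_ne_zero_iff]
    intro b hb
    simp only [Finset.mem_Icc] at ha hb
    exact hx a b ha.1 (by omega) hb.1 (by omega)
  intro i j hi him hj hjn
  refine ⟨key i j him hjn, ?_⟩
  obtain ⟨i0, rfl⟩ : ∃ i0, i = i0 + 1 := ⟨i - 1, by omega⟩
  obtain ⟨j0, rfl⟩ : ∃ j0, j = j0 + 1 := ⟨j - 1, by omega⟩
  simp only [Nat.add_sub_cancel]
  rw [key (i0+1) (j0+1) him hjn, key i0 j0 (by omega) (by omega),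
    key i0 (j0+1) (by omega) hjn, key (i0+1) j0 him (by omega)]
  rw [eq_div_iff (mul_ne_zero (hnz i0 (j0+1) (by omega) hjn) (hnz (i0+1) j0 him (by omega)))]
  have e1 : ∏ a ∈ Finset.Icc 1 (i0+1), ∏ b ∈ Finset.Icc 1 (j0+1), x a b
      = (∏ a ∈ Finset.Icc 1 i0, ∏ b ∈ Finset.Icc 1 (j0+1), x a b) *
        ∏ b ∈ Finset.Icc 1 (j0+1), x (i0+1) b :=
    Finset.prod_Icc_succ_top (by omega) _
  have e2 : ∏ a ∈ Finset.Icc 1 (i0+1), ∏ b ∈ Finset.Icc 1 j0, x a b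
      = (∏ a ∈ Finset.Icc 1 i0, ∏ b ∈ Finset.Icc 1 j0, x a b) *
        ∏ b ∈ Finset.Icc 1 j0, x (i0+1) b :=
    Finset.prod_Icc_succ_top (by omega) _
  have e3 : ∏ b ∈ Finset.Icc 1 (j0+1), x (i0+1) b
      = (∏ b ∈ Finset.Icc 1 j0, x (i0+1) b) * x (i0+1) (j0+1) :=
    Finset.prod_Icc_succ_top (by omega) _
  rw [e1, e2, e3]
  ring
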